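/- Let p > q ≥ 2 be integers and let r, s be integers with r·p + s·q = 1, |r| < q, and 1 < s < p. For each natural number n set g_n = (u^s·v^r)·((u^s·v^r)^q·u^{−1})^n in H. Then for all natural numbers m ≠ n, the elements g_m and g_n are not conjugate in H. -/

import Mathlib

set_option linter.unusedSectionVars false


/-- The relators `u^p` and `v^q` presenting the free product `ℤ/p ∗ ℤ/q`, in the free
group on two generators (`FreeGroup.of 0 = u`, `FreeGroup.of 1 = v`). -/
def freeProdRels (p q : ℤ) : Set (FreeGroup (Fin 2)) :=
  {FreeGroup.of 0 ^ p, FreeGroup.of 1 ^ q}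

/-- The group `H = ⟨u, v ∣ u^p = 1, v^q = 1⟩ ≅ ℤ/p ∗ ℤ/q`. -/
abbrev FreeProdGroup (p q : ℤ) := PresentedGroup (freeProdRels p q)

/-- The generator `u`. -/
def u (p q : ℤ) : FreeProdGroup p q := PresentedGroup.of 0

/-- The generator `v`. -/
def v (p q : ℤ) : FreeProdGroup p q := PresentedGroup.of 1

/-- The element `g_n = (u^s v^r) ((u^s v^r)^q u^{-1})^n`. -/
def g (p q r s : ℤ) (n : ℕ) : FreeProdGroup p q :=
  (u p q ^ s * v p q ^ r) * ((u p q ^ s * v p q ^ r) ^ q * (u p q)⁻¹) ^ n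

open Monoid.CoprodI

section LenLemmas

variable {ι : Type*} [DecidableEq ι] {M : ι → Type*} [∀ i, Group (M i)]
  [∀ i, DecidableEq (M i)]

/-- The length of the normal form of an element of a free product. -/
noncomputable def cLen (x : Monoid.CoprodI M) : ℕ := (Word.equiv x).toList.length

lemma cLen_prod (w : Word M) : cLen (Word.prod w) = w.toList.length := by
  have h : Word.prod w = Word.equiv.symm w := rfl
  rw [cLen, h, Equiv.apply_symm_apply]

lemma length_rcons_le {i : ι} (p : Word.Pair M i) :
    (Word.rcons p).toList.length ≤ p.tail.toList.length + 1 := by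
  rw [Word.rcons]
  split_ifs <;> simp [Word.cons]

lemma length_tail_le_rcons {i : ι} (p : Word.Pair M i) :
    p.tail.toList.length ≤ (Word.rcons p).toList.length := by
  rw [Word.rcons]
  split_ifs <;> simp [Word.cons]

lemma equivPair_tail_length_le (i : ι) (w : Word M) :
    (Word.equivPair i w).tail.toList.length ≤ w.toList.length := by
  have h : Word.rcons (Word.equivPair i w) = w := by
    rw [← Word.equivPair_symm]
    exact (Word.equivPair i).symm_apply_apply w
  have := length_tail_le_rcons (Word.equivPair i w)
  rwa [h] at this

lemma cLen_of_mul_le {i : ι} (m : M i) (x : Monoid.CoprodI M) :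
    cLen (of m * x) ≤ cLen x + 1 := by
  have h1 : Word.equiv (of m * x) = of m • Word.equiv x := by
    show (of m * x) • (Word.empty : Word M) = of m • (x • Word.empty)
    rw [mul_smul]
  rw [cLen, h1, Word.of_smul_def]
  refine le_trans (length_rcons_le _) ?_
  exact Nat.add_le_add_right (equivPair_tail_length_le i (Word.equiv x)) 1

lemma cLen_listProd_mul_le (l : List (Σ i, M i)) (y : Monoid.CoprodI M) :
    cLen ((l.map fun a => of a.snd).prod * y) ≤ l.length + cLen y := by
  induction l with
  | nil => simp
  | cons a l ih =>
      simp only [List.map_cons, List.prod_cons, List.length_cons, mul_assoc]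
      calc cLen (of a.snd * ((l.map fun a => of a.snd).prod * y))
          ≤ cLen ((l.map fun a => of a.snd).prod * y) + 1 := cLen_of_mul_le _ _
        _ ≤ l.length + cLen y + 1 := Nat.add_le_add_right ih 1
        _ = l.length + 1 + cLen y := by omega

lemma cLen_mul_le (x y : Monoid.CoprodI M) : cLen (x * y) ≤ cLen x + cLen y := by
  have hx : x = ((Word.equiv x).toList.map fun a => of a.snd).prod := by
    have h1 : x = Word.prod (Word.equiv x) := by
      have := Word.equiv.symm_apply_apply x
      exact this.symm
    exact h1
  conv_lhs => rw [hx]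
  exact cLen_listProd_mul_le _ y

/-- `blocks` builds an alternating list of letters out of a list of pairs. -/
def blocks (i₀ i₁ : ι) : List (M i₀ × M i₁) → List (Σ i, M i)
  | [] => []
  | p :: l => ⟨i₀, p.1⟩ :: ⟨i₁, p.2⟩ :: blocks i₀ i₁ l

lemma blocks_head? (i₀ i₁ : ι) (l : List (M i₀ × M i₁)) :
    ∀ a ∈ (blocks i₀ i₁ l).head?, a.1 = i₀ := by
  cases l <;> simp [blocks]

lemma blocks_chain (i₀ i₁ : ι) (h : i₀ ≠ i₁) (l : List (M i₀ × M i₁)) :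
    (blocks i₀ i₁ l).Chain' (fun a b => a.1 ≠ b.1) := by
  induction l with
  | nil => simp [blocks, List.Chain']
  | cons p l ih =>
      refine List.isChain_cons_cons.2 ⟨h, List.isChain_cons.2 ⟨?_, ih⟩⟩
      intro y hy
      have := blocks_head? i₀ i₁ l y hy
      rw [this]
      exact h.symm

lemma blocks_ne_one (i₀ i₁ : ι) (l : List (M i₀ × M i₁))
    (hl : ∀ p ∈ l, p.1 ≠ 1 ∧ p.2 ≠ 1) :
    ∀ a ∈ blocks i₀ i₁ l, a.2 ≠ 1 := by
  induction l with
  | nil => simp [blocks]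
  | cons p l ih =>
      intro a ha
      rw [blocks] at ha
      rcases List.mem_cons.mp ha with rfl | ha
      · exact (hl p (by simp)).1
      · rcases List.mem_cons.mp ha with rfl | ha
        · exact (hl p (by simp)).2
        · exact ih (fun p hp => hl p (by simp [hp])) a ha

lemma blocks_length (i₀ i₁ : ι) (l : List (M i₀ × M i₁)) :
    (blocks i₀ i₁ l).length = 2 * l.length := by
  induction l with
  | nil => simp [blocks]
  | cons p l ih => simp [blocks, ih]; omega

lemma blocks_map_prod (i₀ i₁ : ι) (l : List (M i₀ × M i₁)) :
    ((blocks i₀ i₁ l).map fun a => of a.snd).prod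
      = (l.map fun p => of p.1 * of p.2).prod := by
  induction l with
  | nil => simp [blocks]
  | cons p l ih => simp [blocks, ih, mul_assoc]

/-- The alternating word associated to a list of pairs of nontrivial letters. -/
def blocksWord (i₀ i₁ : ι) (h : i₀ ≠ i₁) (l : List (M i₀ × M i₁))
    (hl : ∀ p ∈ l, p.1 ≠ 1 ∧ p.2 ≠ 1) : Word M :=
  ⟨blocks i₀ i₁ l, blocks_ne_one i₀ i₁ l hl, blocks_chain i₀ i₁ h l⟩

lemma cLen_pairs (i₀ i₁ : ι) (h : i₀ ≠ i₁) (l : List (M i₀ × M i₁))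
    (hl : ∀ p ∈ l, p.1 ≠ 1 ∧ p.2 ≠ 1) :
    cLen ((l.map fun p => of p.1 * of p.2).prod) = 2 * l.length := by
  rw [← blocks_map_prod]
  have h1 : ((blocks i₀ i₁ l).map fun a => of a.snd).prod
      = Word.prod (blocksWord i₀ i₁ h l hl) := rfl
  rw [h1, cLen_prod]
  exact blocks_length i₀ i₁ l

end LenLemmas

section ListHelpers

variable {α : Type*} {G : Type*} [Monoid G]

lemma flatten_replicate_map_prod (F : α → G) (k : ℕ) (bl : List α) :
    (((List.replicate k bl).flatten).map F).prod = ((bl.map F).prod) ^ k := by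
  induction k with
  | zero => simp
  | succ k ih => simp [List.replicate_succ, ih, pow_succ']

lemma flatten_replicate_length (k : ℕ) (bl : List α) :
    ((List.replicate k bl).flatten).length = k * bl.length := by
  induction k with
  | zero => simp
  | succ k ih => simp [List.replicate_succ, ih]; ring

lemma mem_flatten_replicate {a : α} {k : ℕ} {bl : List α}
    (h : a ∈ (List.replicate k bl).flatten) : a ∈ bl := by
  rw [List.mem_flatten] at h
  rcases h with ⟨l, hl, ha⟩
  rw [List.mem_replicate] at hl
  rwa [hl.2] at ha

end ListHelpers

section Specific

/-- The family `(ℤ/P, ℤ/Q)` (written multiplicatively), indexed by `Fin 2`. -/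
abbrev Mfam (P Q : ℕ) : Fin 2 → Type := fun i => Multiplicative (ZMod (![P, Q] i))

/-- The generator of the first factor. -/
def xel (P Q : ℕ) : Mfam P Q 0 := Multiplicative.ofAdd (1 : ZMod P)

/-- The generator of the second factor. -/
def yel (P Q : ℕ) : Mfam P Q 1 := Multiplicative.ofAdd (1 : ZMod Q)

/-- The image of `u` in the free product. -/
def XX (P Q : ℕ) : Monoid.CoprodI (Mfam P Q) := of (xel P Q)

/-- The image of `v` in the free product. -/
def YY (P Q : ℕ) : Monoid.CoprodI (Mfam P Q) := of (yel P Q)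

lemma ofAdd_one_zpow (N : ℕ) (t : ℤ) :
    (Multiplicative.ofAdd (1 : ZMod N)) ^ t = Multiplicative.ofAdd ((t : ZMod N)) := by
  apply Multiplicative.toAdd.injective
  rw [toAdd_zpow]
  simp [zsmul_eq_mul]

lemma ofAdd_one_zpow_eq_one_iff (N : ℕ) (t : ℤ) :
    (Multiplicative.ofAdd (1 : ZMod N)) ^ t = 1 ↔ (N : ℤ) ∣ t := by
  rw [ofAdd_one_zpow, ← ZMod.intCast_zmod_eq_zero_iff_dvd]
  exact ofAdd_eq_one

variable (P Q : ℕ) (s r : ℤ)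

/-- The element `A = X^s Y^r`. -/
def AA : Monoid.CoprodI (Mfam P Q) := XX P Q ^ s * YY P Q ^ r

/-- The element `E = X^{s-1} Y^r A^{Q-1}`, a cyclic-reduction building block. -/
def EE : Monoid.CoprodI (Mfam P Q) := XX P Q ^ (s - 1) * YY P Q ^ r * AA P Q s r ^ (Q - 1)

/-- The pair corresponding to the block `A`. -/
def paB : Mfam P Q 0 × Mfam P Q 1 := (xel P Q ^ s, yel P Q ^ r)

/-- The pair beginning the block `E`. -/
def peB : Mfam P Q 0 × Mfam P Q 1 := (xel P Q ^ (s - 1), yel P Q ^ r)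

/-- The list of pairs whose associated word is the normal form of `(A E^n)^k`. -/
def bigList (n k : ℕ) : List (Mfam P Q 0 × Mfam P Q 1) :=
  (List.replicate k (paB P Q s r ::
    (List.replicate n (peB P Q s r :: List.replicate (Q - 1) (paB P Q s r))).flatten)).flatten

lemma mem_bigList {n k : ℕ} {p : Mfam P Q 0 × Mfam P Q 1}
    (hp : p ∈ bigList P Q s r n k) : p = paB P Q s r ∨ p = peB P Q s r := by
  have h1 := mem_flatten_replicate hp
  rcases List.mem_cons.mp h1 with rfl | h1
  · exact Or.inl rfl
  · rcases List.mem_cons.mp (mem_flatten_replicate h1) with rfl | h2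
    · exact Or.inr rfl
    · exact Or.inl (List.eq_of_mem_replicate h2)

lemma bigList_length (hQ : 1 ≤ Q) (n k : ℕ) :
    (bigList P Q s r n k).length = k * (1 + n * Q) := by
  rw [bigList, flatten_replicate_length]
  congr 1
  have h2 : (peB P Q s r :: List.replicate (Q - 1) (paB P Q s r)).length = Q := by
    simp
    omega
  simp [flatten_replicate_length, h2]
  omega

lemma bigList_prod (n k : ℕ) :
    ((bigList P Q s r n k).map fun p => of p.1 * of p.2).prod
      = (AA P Q s r * EE P Q s r ^ n) ^ k := by
  rw [bigList, flatten_replicate_map_prod]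
  congr 1
  simp only [List.map_cons, List.prod_cons, flatten_replicate_map_prod]
  congr 1
  · show of (paB P Q s r).1 * of (paB P Q s r).2 = AA P Q s r
    rw [paB, AA, XX, YY, ← map_zpow, ← map_zpow]
  · congr 1
    simp only [List.map_cons, List.prod_cons, List.map_replicate, List.prod_replicate]
    rw [EE]
    congr 1
    · show of (peB P Q s r).1 * of (peB P Q s r).2 = XX P Q ^ (s - 1) * YY P Q ^ r
      rw [peB, XX, YY, ← map_zpow, ← map_zpow]
    · congr 1
      show of (paB P Q s r).1 * of (paB P Q s r).2 = AA P Q s r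
      rw [paB, AA, XX, YY, ← map_zpow, ← map_zpow]

lemma cLen_AE_pow (hQ : 1 ≤ Q)
    (h1 : xel P Q ^ s ≠ 1) (h2 : xel P Q ^ (s - 1) ≠ 1) (h3 : yel P Q ^ r ≠ 1)
    (n k : ℕ) :
    cLen ((AA P Q s r * EE P Q s r ^ n) ^ k) = 2 * (k * (1 + n * Q)) := by
  rw [← bigList_prod]
  rw [cLen_pairs 0 1 (by decide) _ ?_]
  · rw [bigList_length P Q s r hQ]
  · intro p hp
    rcases mem_bigList P Q s r hp with rfl | rfl
    · exact ⟨h1, h3⟩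
    · exact ⟨h2, h3⟩

end Specific

lemma nat_growth_le {a b D : ℕ} (h : ∀ k, k * a ≤ k * b + D) : a ≤ b := by
  by_contra hab
  push_neg at hab
  have h1 := h (D + 1)
  have h2 : (D + 1) * (b + 1) ≤ (D + 1) * a := Nat.mul_le_mul_left _ hab
  have h3 : (D + 1) * (b + 1) = (D + 1) * b + (D + 1) := by ring
  linarith

theorem g_not_conjugate (p q r s : ℤ) (hpq : q < p) (hq : 2 ≤ q)
    (hrs : r * p + s * q = 1) (hr : |r| < q) (hs1 : 1 < s) (hs2 : s < p)
    (m n : ℕ) (hmn : m ≠ n) :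
    ¬ IsConj (g p q r s m) (g p q r s n) := by
  intro hconj
  set P := p.toNat with hPdef
  set Q := q.toNat with hQdef
  have hPp : (P : ℤ) = p := Int.toNat_of_nonneg (by omega)
  have hQq : (Q : ℤ) = q := Int.toNat_of_nonneg (by omega)
  have hQ2 : 2 ≤ Q := by omega
  -- divisibility facts
  have hps : ¬ ((P : ℤ) ∣ s) := by
    rw [hPp]
    intro hd
    have := Int.le_of_dvd (by omega) hd
    omega
  have hps' : ¬ ((P : ℤ) ∣ (s - 1)) := by
    rw [hPp]
    intro hd
    have := Int.le_of_dvd (by omega) hd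
    omega
  have hr0 : r ≠ 0 := by
    intro h
    rw [h] at hrs
    nlinarith
  have hqr : ¬ ((Q : ℤ) ∣ r) := by
    rw [hQq]
    intro hd
    have := Int.le_of_dvd (abs_pos.mpr hr0) ((dvd_abs q r).mpr hd)
    omega
  -- nontriviality of letters
  have h1 : xel P Q ^ s ≠ 1 := fun h => hps ((ofAdd_one_zpow_eq_one_iff P s).mp h)
  have h2 : xel P Q ^ (s - 1) ≠ 1 := fun h => hps' ((ofAdd_one_zpow_eq_one_iff P (s - 1)).mp h)
  have h3 : yel P Q ^ r ≠ 1 := fun h => hqr ((ofAdd_one_zpow_eq_one_iff Q r).mp h)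
  -- the homomorphism to the free product of cyclic groups
  set F : Fin 2 → Monoid.CoprodI (Mfam P Q) := ![XX P Q, YY P Q] with hF
  have hrel : ∀ w ∈ freeProdRels p q, FreeGroup.lift F w = 1 := by
    intro w hw
    simp only [freeProdRels, Set.mem_insert_iff, Set.mem_singleton_iff] at hw
    rcases hw with rfl | rfl
    · rw [map_zpow]
      have hF0 : FreeGroup.lift F (FreeGroup.of 0) = XX P Q := by simp [hF]
      rw [hF0, XX, ← map_zpow]
      have : xel P Q ^ p = 1 := (ofAdd_one_zpow_eq_one_iff P p).mpr (by rw [hPp])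
      rw [this, map_one]
    · rw [map_zpow]
      have hF1 : FreeGroup.lift F (FreeGroup.of 1) = YY P Q := by simp [hF]
      rw [hF1, YY, ← map_zpow]
      have : yel P Q ^ q = 1 := (ofAdd_one_zpow_eq_one_iff Q q).mpr (by rw [hQq])
      rw [this, map_one]
  set φ : FreeProdGroup p q →* Monoid.CoprodI (Mfam P Q) := PresentedGroup.toGroup hrel with hφ
  have hu : φ (u p q) = XX P Q := by
    rw [hφ, u, PresentedGroup.toGroup.of, hF]
    simp
  have hv : φ (v p q) = YY P Q := by
    rw [hφ, v, PresentedGroup.toGroup.of, hF]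
    simp
  -- image of g
  have hg : ∀ j : ℕ,
      φ (g p q r s j) = AA P Q s r * (AA P Q s r ^ q * (XX P Q)⁻¹) ^ j := by
    intro j
    simp only [g, map_mul, map_pow, map_zpow, map_inv, hu, hv, AA]
  -- conjugate to the cyclically reduced form
  set E' : Monoid.CoprodI (Mfam P Q) := (XX P Q)⁻¹ * AA P Q s r ^ q with hE'
  have conjAC : ∀ j : ℕ,
      IsConj (AA P Q s r * (AA P Q s r ^ q * (XX P Q)⁻¹) ^ j) (AA P Q s r * E' ^ j) := by
    intro j
    rw [isConj_iff]
    refine ⟨(AA P Q s r ^ q)⁻¹, ?_⟩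
    have hconj1 : (AA P Q s r ^ q)⁻¹ * (AA P Q s r ^ q * (XX P Q)⁻¹) *
        ((AA P Q s r ^ q)⁻¹)⁻¹ = E' := by
      rw [hE']
      group
    have hkey := conj_pow (a := (AA P Q s r ^ q)⁻¹) (b := AA P Q s r ^ q * (XX P Q)⁻¹)
      (i := j)
    rw [hconj1] at hkey
    calc (AA P Q s r ^ q)⁻¹ * (AA P Q s r * (AA P Q s r ^ q * (XX P Q)⁻¹) ^ j) *
          ((AA P Q s r ^ q)⁻¹)⁻¹
        = AA P Q s r * ((AA P Q s r ^ q)⁻¹ * (AA P Q s r ^ q * (XX P Q)⁻¹) ^ j *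
          ((AA P Q s r ^ q)⁻¹)⁻¹) := by group
      _ = AA P Q s r * E' ^ j := by rw [hkey]
  -- E' = EE
  have hEEeq : E' = EE P Q s r := by
    have hq' : q = ((Q - 1 : ℕ) : ℤ) + 1 := by
      omega
    rw [hE', EE, hq', zpow_add, zpow_one, zpow_natCast]
    have hcomm : AA P Q s r ^ (Q - 1) * AA P Q s r = AA P Q s r * AA P Q s r ^ (Q - 1) :=
      (Commute.pow_self (AA P Q s r) (Q - 1)).eq
    rw [hcomm, ← mul_assoc]
    congr 1
    rw [AA, ← mul_assoc]
    congr 1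
    rw [show s - 1 = -1 + s by ring, zpow_add, zpow_neg_one]
  -- combine conjugacies
  have hconj2 : IsConj (AA P Q s r * EE P Q s r ^ m) (AA P Q s r * EE P Q s r ^ n) := by
    have hm := conjAC m
    have hn := conjAC n
    rw [hEEeq] at hm hn
    have hmap : IsConj (φ (g p q r s m)) (φ (g p q r s n)) := φ.map_isConj hconj
    rw [hg m, hg n] at hmap
    exact (hm.symm.trans hmap).trans hn
  -- extract length contradiction
  rw [isConj_iff] at hconj2
  obtain ⟨c, hc⟩ := hconj2
  have hQ1 : 1 ≤ Q := by omega
  have hlen : ∀ j k : ℕ,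
      cLen ((AA P Q s r * EE P Q s r ^ j) ^ k) = 2 * (k * (1 + j * Q)) :=
    fun j k => cLen_AE_pow P Q s r hQ1 h1 h2 h3 j k
  set D : ℕ := cLen c⁻¹ + cLen c with hD
  have hineq1 : ∀ k : ℕ, k * (2 * (1 + m * Q)) ≤ k * (2 * (1 + n * Q)) + D := by
    intro k
    have hpow := conj_pow (a := c) (b := AA P Q s r * EE P Q s r ^ m) (i := k)
    rw [hc] at hpow
    have heq : (AA P Q s r * EE P Q s r ^ m) ^ k
        = c⁻¹ * ((AA P Q s r * EE P Q s r ^ n) ^ k * c) := by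
      rw [hpow]
      group
    have hb1 : cLen ((AA P Q s r * EE P Q s r ^ m) ^ k)
        ≤ cLen c⁻¹ + (cLen ((AA P Q s r * EE P Q s r ^ n) ^ k) + cLen c) := by
      rw [heq]
      exact le_trans (cLen_mul_le _ _)
        (Nat.add_le_add_left (cLen_mul_le _ _) _)
    rw [hlen m k, hlen n k] at hb1
    have e1 : 2 * (k * (1 + m * Q)) = k * (2 * (1 + m * Q)) := by ring
    have e2 : 2 * (k * (1 + n * Q)) = k * (2 * (1 + n * Q)) := by ring
    rw [hD]
    linarith
  have hineq2 : ∀ k : ℕ, k * (2 * (1 + n * Q)) ≤ k * (2 * (1 + m * Q)) + D := by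
    intro k
    have hc' : c⁻¹ * (AA P Q s r * EE P Q s r ^ n) * (c⁻¹)⁻¹
        = AA P Q s r * EE P Q s r ^ m := by
      rw [← hc]
      group
    have hpow := conj_pow (a := c⁻¹) (b := AA P Q s r * EE P Q s r ^ n) (i := k)
    rw [hc'] at hpow
    have heq : (AA P Q s r * EE P Q s r ^ n) ^ k
        = c * ((AA P Q s r * EE P Q s r ^ m) ^ k * c⁻¹) := by
      rw [hpow]
      group
    have hb1 : cLen ((AA P Q s r * EE P Q s r ^ n) ^ k)
        ≤ cLen c + (cLen ((AA P Q s r * EE P Q s r ^ m) ^ k) + cLen c⁻¹) := by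
      rw [heq]
      exact le_trans (cLen_mul_le _ _)
        (Nat.add_le_add_left (cLen_mul_le _ _) _)
    rw [hlen n k, hlen m k] at hb1
    have e1 : 2 * (k * (1 + m * Q)) = k * (2 * (1 + m * Q)) := by ring
    have e2 : 2 * (k * (1 + n * Q)) = k * (2 * (1 + n * Q)) := by ring
    rw [hD]
    linarith
  have hle1 := nat_growth_le hineq1
  have hle2 := nat_growth_le hineq2
  have : m * Q = n * Q := by omega
  exact hmn (Nat.eq_of_mul_eq_mul_right (by omega) this)
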